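/- Let α > 1, A > 0, and c > 0 be real numbers. Then the integrals ∫_0^∞ (x+c)^{−α−1} e^{−A/(x+c)} dx and ∫_0^∞ x·(x+c)^{−α−1} e^{−A/(x+c)} dx are finite, the former is strictly positive, and ( ∫_0^∞ x·(x+c)^{−α−1} e^{−A/(x+c)} dx ) / ( ∫_0^∞ (x+c)^{−α−1} e^{−A/(x+c)} dx ) = A · ( ∫_0^{A/c} t^{α−2} e^{−t} dt ) / ( ∫_0^{A/c} t^{α−1} e^{−t} dt ) − c. -/

import Mathlib

open MeasureTheory Set

lemma aux_rpow_shift_integrable (c r : ℝ) (hc : 0 < c) (hr : r < -1) :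
    IntegrableOn (fun x => (x + c) ^ r) (Ioi (0:ℝ)) := by
  have h : IntegrableOn (fun x : ℝ => x ^ r) (Ioi c) := integrableOn_Ioi_rpow_of_lt hr hc
  have e := (measurePreserving_add_right (volume : Measure ℝ) c).integrableOn_comp_preimage
    (measurableEmbedding_addRight c) (f := fun x : ℝ => x ^ r) (s := Ioi c)
  have hpre : (fun x : ℝ => x + c) ⁻¹' Ioi c = Ioi 0 := by
    ext x; simp [lt_add_iff_pos_left]
  rw [hpre] at e
  exact e.mpr h

lemma aux_cont (A c r : ℝ) (hc : 0 < c) :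
    ContinuousOn (fun x : ℝ => (x + c) ^ r * Real.exp (-A / (x + c))) (Ioi 0) := by
  have hne : ∀ x ∈ Ioi (0:ℝ), x + c ≠ 0 := fun x hx => by
    have : (0:ℝ) < x := hx; positivity
  have h1 : ContinuousOn (fun x : ℝ => x + c) (Ioi 0) :=
    (continuous_id.add continuous_const).continuousOn
  exact (h1.rpow_const (fun x hx => Or.inl (hne x hx))).mul
    ((Real.continuous_exp.comp_continuousOn (continuousOn_const.div h1 hne)))

lemma aux_integrable (A c r : ℝ) (hA : 0 < A) (hc : 0 < c) (hr : r < -1) :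
    IntegrableOn (fun x => (x + c) ^ r * Real.exp (-A / (x + c))) (Ioi (0:ℝ)) := by
  refine Integrable.mono' (aux_rpow_shift_integrable c r hc hr)
    ((aux_cont A c r hc).aestronglyMeasurable measurableSet_Ioi) ?_
  rw [ae_restrict_iff' measurableSet_Ioi]
  filter_upwards with x hx
  have hx0 : (0:ℝ) < x := hx
  have hxc : (0:ℝ) < x + c := by linarith
  have h1 : Real.exp (-A / (x + c)) ≤ 1 := by
    rw [Real.exp_le_one_iff]
    apply div_nonpos_of_nonpos_of_nonneg <;> linarith
  rw [Real.norm_eq_abs, abs_of_nonneg (by positivity)]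
  calc (x + c) ^ r * Real.exp (-A / (x + c)) ≤ (x + c) ^ r * 1 := by
        apply mul_le_mul_of_nonneg_left h1 (by positivity)
    _ = (x + c) ^ r := mul_one _

lemma aux_cov (A c p : ℝ) (hA : 0 < A) (hc : 0 < c) :
    ∫ t in Ioo (0:ℝ) (A/c), t ^ p * Real.exp (-t)
      = A ^ (p+1) * ∫ x in Ioi (0:ℝ), (x + c) ^ (-p - 2) * Real.exp (-A / (x + c)) := by
  have himg : (fun x : ℝ => A / (x + c)) '' Ioi 0 = Ioo 0 (A/c) := by
    ext t
    constructor
    · rintro ⟨x, hx, rfl⟩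
      have hx0 : (0:ℝ) < x := hx
      have hxc : (0:ℝ) < x + c := by linarith
      exact ⟨by positivity, div_lt_div_of_pos_left hA hc (by linarith)⟩
    · rintro ⟨ht0, htc⟩
      refine ⟨A / t - c, ?_, ?_⟩
      · have : c < A / t := by
          rw [lt_div_iff₀ ht0]
          calc c * t < c * (A / c) := by exact mul_lt_mul_of_pos_left htc hc
            _ = A := by field_simp
        simpa [sub_pos] using this
      · show A / (A / t - c + c) = t
        rw [show A / t - c + c = A / t by ring]
        field_simp
  have hderiv : ∀ x ∈ Ioi (0:ℝ), HasDerivWithinAt (fun x : ℝ => A / (x + c))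
      (-(A / (x + c) ^ 2)) (Ioi 0) x := by
    intro x hx
    have hx0 : (0:ℝ) < x := hx
    have hxc : x + c ≠ 0 := by positivity
    have h1 : HasDerivAt (fun x : ℝ => A / (x + c)) ((0 * (x+c) - A * 1)/(x+c)^2) x :=
      (hasDerivAt_const x A).div ((hasDerivAt_id x).add_const c) hxc
    have : (0 * (x+c) - A * 1)/(x+c)^2 = -(A / (x + c) ^ 2) := by ring
    exact (this ▸ h1).hasDerivWithinAt
  have hinj : InjOn (fun x : ℝ => A / (x + c)) (Ioi 0) := by
    intro x hx y hy hxy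
    have hx0 : (0:ℝ) < x := hx
    have hy0 : (0:ℝ) < y := hy
    have hxc : x + c ≠ 0 := by positivity
    have hyc : y + c ≠ 0 := by positivity
    field_simp at hxy
    linarith
  rw [← himg, integral_image_eq_integral_abs_deriv_smul measurableSet_Ioi hderiv hinj,
    ← smul_eq_mul, ← integral_smul]
  refine setIntegral_congr_fun measurableSet_Ioi (fun x hx => ?_)
  have hx0 : (0:ℝ) < x := hx
  have hxc : (0:ℝ) < x + c := by linarith
  have habs : |(-(A / (x + c) ^ 2))| = A / (x+c)^2 := by
    rw [abs_neg, abs_of_pos (by positivity)]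
  simp only [smul_eq_mul, habs]
  rw [Real.div_rpow hA.le hxc.le]
  have e1 : (x+c) ^ (-p-2) = ((x+c) ^ p)⁻¹ * ((x+c)^2)⁻¹ := by
    rw [show -p-2 = -p + (-2:ℝ) by ring, Real.rpow_add hxc, Real.rpow_neg hxc.le,
      show ((-2:ℝ)) = -((2:ℕ):ℝ) by norm_num, Real.rpow_neg hxc.le, Real.rpow_natCast]
  have e2 : A ^ (p+1) = A ^ p * A := by
    rw [Real.rpow_add hA, Real.rpow_one]
  rw [e1, e2, neg_div]
  have h1 : (x+c)^p ≠ 0 := by positivity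
  have h2 : ((x+c)^2 : ℝ) ≠ 0 := by positivity
  field_simp

/-- Posterior expectation of the truncated inverse gamma distribution, expressed via
lower incomplete gamma functions. -/
theorem truncated_inverse_gamma_posterior_mean
    (α A c : ℝ) (hα : 1 < α) (hA : 0 < A) (hc : 0 < c) :
    IntegrableOn (fun x => (x + c) ^ (-α - 1) * Real.exp (-A / (x + c))) (Ioi 0) ∧
    IntegrableOn (fun x => x * (x + c) ^ (-α - 1) * Real.exp (-A / (x + c))) (Ioi 0) ∧
    (0 < ∫ x in Ioi (0 : ℝ), (x + c) ^ (-α - 1) * Real.exp (-A / (x + c))) ∧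
    (∫ x in Ioi (0 : ℝ), x * (x + c) ^ (-α - 1) * Real.exp (-A / (x + c))) /
        (∫ x in Ioi (0 : ℝ), (x + c) ^ (-α - 1) * Real.exp (-A / (x + c)))
      = A * (∫ s in (0 : ℝ)..(A / c), s ^ (α - 2) * Real.exp (-s)) /
          (∫ s in (0 : ℝ)..(A / c), s ^ (α - 1) * Real.exp (-s)) - c := by
  simp only [mul_assoc]
  set h : ℝ → ℝ := fun x => (x + c) ^ (-α - 1) * Real.exp (-A / (x + c)) with hh
  have hInt1 : IntegrableOn h (Ioi 0) := aux_integrable A c _ hA hc (by linarith)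
  have hIntα : IntegrableOn (fun x => (x + c) ^ (-α) * Real.exp (-A / (x + c))) (Ioi 0) :=
    aux_integrable A c _ hA hc (by linarith)
  have hrpow : ∀ x : ℝ, 0 < x → (x + c) ^ (-α : ℝ) = (x + c) * (x + c) ^ (-α - 1) := by
    intro x hx
    have hxc : (0:ℝ) < x + c := by linarith
    have e := Real.rpow_add_one (x := x + c) hxc.ne' (-α - 1)
    rw [show -α - 1 + 1 = -α by ring] at e
    rw [e]; ring
  have hInt2 : IntegrableOn (fun x => x * ((x + c) ^ (-α - 1) * Real.exp (-A / (x + c))))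
      (Ioi 0) := by
    refine Integrable.mono' hIntα
      ((continuousOn_id.mul (aux_cont A c _ hc)).aestronglyMeasurable measurableSet_Ioi) ?_
    rw [ae_restrict_iff' measurableSet_Ioi]
    filter_upwards with x hx
    have hx0 : (0:ℝ) < x := hx
    have hxc : (0:ℝ) < x + c := by linarith
    rw [Real.norm_eq_abs, abs_of_nonneg (by positivity), hrpow x hx0]
    have : x * ((x + c) ^ (-α - 1) * Real.exp (-A / (x + c)))
        ≤ (x + c) * ((x + c) ^ (-α - 1) * Real.exp (-A / (x + c))) := by
      apply mul_le_mul_of_nonneg_right (by linarith) (by positivity)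
    linarith [this]
  have hD : 0 < ∫ x in Ioi (0:ℝ), h x := by
    rw [setIntegral_pos_iff_support_of_nonneg_ae _ hInt1]
    · have hsub : Ioi (0:ℝ) ⊆ Function.support h := by
        intro x hx
        have hx0 : (0:ℝ) < x := hx
        have hxc : (0:ℝ) < x + c := by linarith
        have : 0 < h x := by positivity
        exact this.ne'
      rw [inter_eq_self_of_subset_right hsub, Real.volume_Ioi]
      exact ENNReal.zero_lt_top
    · filter_upwards [ae_restrict_mem measurableSet_Ioi] with x hx
      have hx0 : (0:ℝ) < x := hx
      have hxc : (0:ℝ) < x + c := by linarith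
      have : 0 < h x := by positivity
      exact this.le
  refine ⟨hInt1, hInt2, hD, ?_⟩
  have cov1 := aux_cov A c (α - 1) hA hc
  rw [show -(α - 1) - 2 = -α - 1 by ring, show α - 1 + 1 = α by ring] at cov1
  have cov2 := aux_cov A c (α - 2) hA hc
  rw [show -(α - 2) - 2 = -α by ring, show α - 2 + 1 = α - 1 by ring] at cov2
  have hsplit : (∫ x in Ioi (0:ℝ), (x + c) ^ (-α) * Real.exp (-A / (x + c)))
      = (∫ x in Ioi (0:ℝ), x * ((x + c) ^ (-α - 1) * Real.exp (-A / (x + c))))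
        + c * ∫ x in Ioi (0:ℝ), h x := by
    have hInt3 : IntegrableOn (fun a => c • h a) (Ioi 0) := hInt1.smul c
    rw [show c * ∫ x in Ioi (0:ℝ), h x = c • ∫ x in Ioi (0:ℝ), h x from rfl, ← integral_smul,
      ← integral_add hInt2 hInt3]
    refine setIntegral_congr_fun measurableSet_Ioi (fun x hx => ?_)
    have hx0 : (0:ℝ) < x := hx
    rw [hrpow x hx0, hh]
    simp only [smul_eq_mul]
    ring
  have hle : (0:ℝ) ≤ A / c := (div_pos hA hc).le
  rw [intervalIntegral.integral_of_le hle, intervalIntegral.integral_of_le hle,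
    integral_Ioc_eq_integral_Ioo, integral_Ioc_eq_integral_Ioo, cov1, cov2, hsplit]
  set D := ∫ x in Ioi (0:ℝ), h x
  set N := ∫ x in Ioi (0:ℝ), x * ((x + c) ^ (-α - 1) * Real.exp (-A / (x + c)))
  have hAα : A ^ α = A ^ (α - 1) * A := by
    rw [← Real.rpow_add_one hA.ne' (α - 1)]; ring_nf
  have hPA : (0:ℝ) < A ^ (α - 1) := Real.rpow_pos_of_pos hA _
  rw [hAα]
  field_simp
  ring
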